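/- Under the local treatment effect assumptions (Z ⫫ (Y(0),Y(1),D(0),D(1)) | X; ε ≤ q(X) ≤ 1−ε a.s.; ℙ(D(1) ≥ D(0)|X) = 1 a.s.; D = ZD(1)+(1−Z)D(0)), for every bounded measurable function f of X: E[(1 − (1−D)Z/q(X) − D(1−Z)/(1−q(X))) · f(X)] = ℙ(C) · E[f(X) | C], where C = {D(1) = 1, D(0) = 0} is the complier event and q(X) = ℙ(Z=1|X). -/

import Mathlib

open MeasureTheory ProbabilityTheory

private lemma abadie_int {Ω : Type*} [MeasurableSpace Ω] {μ : Measure Ω} [IsFiniteMeasure μ]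
    {u : Ω → ℝ} (hu : AEStronglyMeasurable u μ) {C : ℝ} (hb : ∀ᵐ ω ∂μ, |u ω| ≤ C) :
    Integrable u μ :=
  Integrable.mono' (integrable_const C) hu (by simpa [Real.norm_eq_abs] using hb)

private lemma abadie_mul_bound {a b Ca Cb : ℝ} (ha : |a| ≤ Ca) (hb : |b| ≤ Cb) (hCa : 0 ≤ Ca) :
    |a * b| ≤ Ca * Cb := by
  rw [abs_mul]; exact mul_le_mul ha hb (abs_nonneg _) hCa

private lemma abadie_pullout {Ω : Type*} {m m0 : MeasurableSpace Ω} (hm : m ≤ m0)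
    (μ : Measure Ω) [IsProbabilityMeasure μ] {h g : Ω → ℝ}
    (hh : StronglyMeasurable[m] h) (hhg : Integrable (fun ω => h ω * g ω) μ)
    (hg : Integrable g μ) :
    ∫ ω, h ω * g ω ∂μ = ∫ ω, h ω * (μ[g|m]) ω ∂μ := by
  have hhg' : Integrable (h * g) μ := hhg
  calc ∫ ω, h ω * g ω ∂μ = ∫ ω, (μ[h * g|m]) ω ∂μ := (integral_condExp (f := h * g) hm).symm
    _ = ∫ ω, h ω * (μ[g|m]) ω ∂μ :=
        integral_congr_ae (condExp_mul_of_stronglyMeasurable_left hh hhg' hg)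

/-- Abadie's κ-weighting theorem: under the local treatment effect assumptions, for every
bounded measurable `f`, `E[κ·f(X)] = ℙ(C)·E[f(X)|C]`, where `C = {D(1)=1, D(0)=0}` is the
complier event and `κ = 1 − (1−D)Z/q(X) − D(1−Z)/(1−q(X))`. -/
theorem statement10 {Ω : Type*} [MeasurableSpace Ω] [StandardBorelSpace Ω]
    (μ : Measure Ω) [IsProbabilityMeasure μ]
    {k : ℕ} (Z D0 D1 D Y0 Y1 : Ω → ℝ) (X : Ω → Fin k → ℝ) (q : (Fin k → ℝ) → ℝ) (ε : ℝ)
    (hZ : Measurable Z) (hD0 : Measurable D0) (hD1 : Measurable D1)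
    (hY0 : Measurable Y0) (hY1 : Measurable Y1) (hX : Measurable X) (hq : Measurable q)
    (hZval : ∀ ω, Z ω = 0 ∨ Z ω = 1) (hD0val : ∀ ω, D0 ω = 0 ∨ D0 ω = 1)
    (hD1val : ∀ ω, D1 ω = 0 ∨ D1 ω = 1)
    (hD : ∀ ω, D ω = Z ω * D1 ω + (1 - Z ω) * D0 ω)
    (hci : CondIndepFun (MeasurableSpace.comap X inferInstance) hX.comap_le
      (fun ω => (Y0 ω, Y1 ω, D0 ω, D1 ω)) Z μ)
    (hmono : ∀ᵐ ω ∂μ, D0 ω ≤ D1 ω)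
    (hε : 0 < ε) (hqb : ∀ᵐ ω ∂μ, ε ≤ q (X ω) ∧ q (X ω) ≤ 1 - ε)
    (hqcond : μ[Z | MeasurableSpace.comap X inferInstance] =ᵐ[μ] fun ω => q (X ω)) :
    ∀ f : (Fin k → ℝ) → ℝ, Measurable f → (∃ C, ∀ x, |f x| ≤ C) →
      ∫ ω, (1 - (1 - D ω) * Z ω / q (X ω) - D ω * (1 - Z ω) / (1 - q (X ω))) * f (X ω) ∂μ
        = (μ {ω | D1 ω = 1 ∧ D0 ω = 0}).toReal *
            ∫ ω, f (X ω) ∂(μ[|{ω | D1 ω = 1 ∧ D0 ω = 0}]) := by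
  intro f hf hbf
  obtain ⟨Cf, hCf⟩ := hbf
  have hCf0 : 0 ≤ Cf := le_trans (abs_nonneg _) (hCf 0)
  have hm := hX.comap_le
  have mX : Measurable[MeasurableSpace.comap X inferInstance] X := measurable_iff_comap_le.mpr le_rfl
  set W : Ω → ℝ × ℝ × ℝ × ℝ := fun ω => (Y0 ω, Y1 ω, D0 ω, D1 ω) with hWdef
  have hWm : Measurable W := hY0.prodMk (hY1.prodMk (hD0.prodMk hD1))
  set s1 : Set (ℝ × ℝ × ℝ × ℝ) :=
    (Set.univ : Set ℝ) ×ˢ ((Set.univ : Set ℝ) ×ˢ ((Set.univ : Set ℝ) ×ˢ ({0} : Set ℝ)))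
    with hs1def
  set s2 : Set (ℝ × ℝ × ℝ × ℝ) :=
    (Set.univ : Set ℝ) ×ˢ ((Set.univ : Set ℝ) ×ˢ (({1} : Set ℝ) ×ˢ (Set.univ : Set ℝ)))
    with hs2def
  have hs1 : MeasurableSet s1 :=
    MeasurableSet.univ.prod (MeasurableSet.univ.prod
      (MeasurableSet.univ.prod (measurableSet_singleton _)))
  have hs2 : MeasurableSet s2 :=
    MeasurableSet.univ.prod (MeasurableSet.univ.prod
      ((measurableSet_singleton _).prod MeasurableSet.univ))
  have hCI := (condIndepFun_iff_condExp_inter_preimage_eq_mul hWm hZ).mp hci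
  -- conditional expectations of the Z-events
  have hZint : Integrable Z μ :=
    abadie_int hZ.aestronglyMeasurable (C := 1)
      (ae_of_all _ fun ω => by rcases hZval ω with h | h <;> simp [h])
  have hcB1 : (μ⟦Z ⁻¹' {1} | MeasurableSpace.comap X inferInstance⟧) =ᵐ[μ] fun ω => q (X ω) := by
    have hZind : Set.indicator (Z ⁻¹' {1}) (fun _ => (1 : ℝ)) = Z := by
      funext ω; rcases hZval ω with h | h <;> simp [Set.indicator_apply, h]
    rw [hZind]; exact hqcond
  have hcB0 : (μ⟦Z ⁻¹' {0} | MeasurableSpace.comap X inferInstance⟧) =ᵐ[μ] fun ω => 1 - q (X ω) := by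
    have hZind : Set.indicator (Z ⁻¹' {0}) (fun _ => (1 : ℝ)) = (fun _ => (1 : ℝ)) - Z := by
      funext ω; rcases hZval ω with h | h <;> simp [Set.indicator_apply, h]
    rw [hZind]
    calc μ[(fun _ => (1 : ℝ)) - Z|MeasurableSpace.comap X inferInstance] =ᵐ[μ] μ[fun _ => (1 : ℝ)|MeasurableSpace.comap X inferInstance] - μ[Z|MeasurableSpace.comap X inferInstance] :=
          condExp_sub (integrable_const 1) hZint _
      _ =ᵐ[μ] fun ω => 1 - q (X ω) := by
          filter_upwards [hqcond] with ω hq'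
          simp [condExp_const hm (1 : ℝ), hq']
  -- membership descriptions
  have hmem1 : ∀ ω, ω ∈ W ⁻¹' s1 ↔ D1 ω = 0 := fun ω => by
    simp [hs1def, hWdef, Set.mem_prod, eq_comm]
  have hmem2 : ∀ ω, ω ∈ W ⁻¹' s2 ↔ D0 ω = 1 := fun ω => by
    simp [hs2def, hWdef, Set.mem_prod, eq_comm]
  -- indicator identities
  have hindb : ∀ (s : Set Ω) (ω : Ω), |Set.indicator s (fun _ => (1 : ℝ)) ω| ≤ 1 := by
    intro s ω; by_cases h : ω ∈ s <;> simp [Set.indicator_apply, h]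
  have hg1 : ∀ ω, Set.indicator (W ⁻¹' s1 ∩ Z ⁻¹' {1}) (fun _ => (1 : ℝ)) ω
      = Z ω * (1 - D1 ω) := by
    intro ω
    rcases hZval ω with hz | hz <;> rcases hD1val ω with h1 | h1 <;>
      simp [Set.indicator_apply, Set.mem_inter_iff, hmem1 ω, Set.mem_preimage, hz, h1]
  have hg2 : ∀ ω, Set.indicator (W ⁻¹' s2 ∩ Z ⁻¹' {0}) (fun _ => (1 : ℝ)) ω
      = (1 - Z ω) * D0 ω := by
    intro ω
    rcases hZval ω with hz | hz <;> rcases hD0val ω with h0 | h0 <;>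
      simp [Set.indicator_apply, Set.mem_inter_iff, hmem2 ω, Set.mem_preimage, hz, h0]
  have hind1 : ∀ ω, Set.indicator (W ⁻¹' s1) (fun _ => (1 : ℝ)) ω = 1 - D1 ω := by
    intro ω
    rcases hD1val ω with h1 | h1 <;> simp [Set.indicator_apply, hmem1 ω, h1]
  have hind2 : ∀ ω, Set.indicator (W ⁻¹' s2) (fun _ => (1 : ℝ)) ω = D0 ω := by
    intro ω
    rcases hD0val ω with h0 | h0 <;> simp [Set.indicator_apply, hmem2 ω, h0]
  -- measurability
  have hfX : Measurable fun ω => f (X ω) := hf.comp hX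
  have hqX : Measurable fun ω => q (X ω) := hq.comp hX
  have hfXsm : StronglyMeasurable[MeasurableSpace.comap X inferInstance] fun ω => f (X ω) := (hf.comp mX).stronglyMeasurable
  have h1sm : StronglyMeasurable[MeasurableSpace.comap X inferInstance] fun ω => f (X ω) / q (X ω) :=
    ((hf.div hq).comp mX).stronglyMeasurable
  have h2sm : StronglyMeasurable[MeasurableSpace.comap X inferInstance] fun ω => f (X ω) / (1 - q (X ω)) :=
    ((hf.div (measurable_const.sub hq)).comp mX).stronglyMeasurable
  -- bounds for the kappa pieces
  have hb1 : ∀ᵐ ω ∂μ, |f (X ω) / q (X ω)| ≤ Cf / ε := by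
    filter_upwards [hqb] with ω hq'
    rw [abs_div, abs_of_pos (lt_of_lt_of_le hε hq'.1)]
    exact div_le_div₀ hCf0 (hCf _) hε hq'.1
  have hb2 : ∀ᵐ ω ∂μ, |f (X ω) / (1 - q (X ω))| ≤ Cf / ε := by
    filter_upwards [hqb] with ω hq'
    have h1q : ε ≤ 1 - q (X ω) := by linarith [hq'.2]
    rw [abs_div, abs_of_pos (lt_of_lt_of_le hε h1q)]
    exact div_le_div₀ hCf0 (hCf _) hε h1q
  have hCfε0 : 0 ≤ Cf / ε := div_nonneg hCf0 hε.le
  -- integrabilities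
  have intF : Integrable (fun ω => f (X ω)) μ :=
    abadie_int hfX.aestronglyMeasurable (ae_of_all _ fun ω => hCf _)
  have int1 : Integrable (fun ω => (f (X ω) / q (X ω)) *
      Set.indicator (W ⁻¹' s1 ∩ Z ⁻¹' {1}) (fun _ => (1 : ℝ)) ω) μ := by
    refine abadie_int (C := Cf / ε * 1)
      (((hfX.div hqX).mul (measurable_const.indicator
        ((hWm hs1).inter (hZ (measurableSet_singleton 1))))).aestronglyMeasurable) ?_
    filter_upwards [hb1] with ω h
    exact abadie_mul_bound h (hindb _ ω) hCfε0
  have int2 : Integrable (fun ω => (f (X ω) / (1 - q (X ω))) *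
      Set.indicator (W ⁻¹' s2 ∩ Z ⁻¹' {0}) (fun _ => (1 : ℝ)) ω) μ := by
    refine abadie_int (C := Cf / ε * 1)
      (((hfX.div (measurable_const.sub hqX)).mul (measurable_const.indicator
        ((hWm hs2).inter (hZ (measurableSet_singleton 0))))).aestronglyMeasurable) ?_
    filter_upwards [hb2] with ω h
    exact abadie_mul_bound h (hindb _ ω) hCfε0
  have intI1 : Integrable (Set.indicator (W ⁻¹' s1 ∩ Z ⁻¹' {1}) (fun _ => (1 : ℝ))) μ :=
    abadie_int (measurable_const.indicator
      ((hWm hs1).inter (hZ (measurableSet_singleton 1)))).aestronglyMeasurable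
      (ae_of_all _ fun ω => hindb _ ω)
  have intI2 : Integrable (Set.indicator (W ⁻¹' s2 ∩ Z ⁻¹' {0}) (fun _ => (1 : ℝ))) μ :=
    abadie_int (measurable_const.indicator
      ((hWm hs2).inter (hZ (measurableSet_singleton 0)))).aestronglyMeasurable
      (ae_of_all _ fun ω => hindb _ ω)
  have intA1 : Integrable (Set.indicator (W ⁻¹' s1) (fun _ => (1 : ℝ))) μ :=
    abadie_int (measurable_const.indicator (hWm hs1)).aestronglyMeasurable
      (ae_of_all _ fun ω => hindb _ ω)
  have intA2 : Integrable (Set.indicator (W ⁻¹' s2) (fun _ => (1 : ℝ))) μ :=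
    abadie_int (measurable_const.indicator (hWm hs2)).aestronglyMeasurable
      (ae_of_all _ fun ω => hindb _ ω)
  have intFA1 : Integrable (fun ω => f (X ω) * Set.indicator (W ⁻¹' s1) (fun _ => (1 : ℝ)) ω) μ :=
    abadie_int (C := Cf * 1)
      ((hfX.mul (measurable_const.indicator (hWm hs1))).aestronglyMeasurable)
      (ae_of_all _ fun ω => abadie_mul_bound (hCf _) (hindb _ ω) hCf0)
  have intFA2 : Integrable (fun ω => f (X ω) * Set.indicator (W ⁻¹' s2) (fun _ => (1 : ℝ)) ω) μ :=
    abadie_int (C := Cf * 1)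
      ((hfX.mul (measurable_const.indicator (hWm hs2))).aestronglyMeasurable)
      (ae_of_all _ fun ω => abadie_mul_bound (hCf _) (hindb _ ω) hCf0)
  have intB1 : Integrable (fun ω => f (X ω) * (1 - D1 ω)) μ := by
    exact intFA1.congr (ae_of_all _ fun ω => by simp only [hind1])
  have intB2 : Integrable (fun ω => f (X ω) * D0 ω) μ := by
    exact intFA2.congr (ae_of_all _ fun ω => by simp only [hind2])
  -- key identity 1
  have key1 : ∫ ω, (f (X ω) / q (X ω)) *
      Set.indicator (W ⁻¹' s1 ∩ Z ⁻¹' {1}) (fun _ => (1 : ℝ)) ω ∂μ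
      = ∫ ω, f (X ω) * (1 - D1 ω) ∂μ := by
    calc ∫ ω, (f (X ω) / q (X ω)) *
          Set.indicator (W ⁻¹' s1 ∩ Z ⁻¹' {1}) (fun _ => (1 : ℝ)) ω ∂μ
        = ∫ ω, (f (X ω) / q (X ω)) *
            (μ[Set.indicator (W ⁻¹' s1 ∩ Z ⁻¹' {1}) (fun _ => (1 : ℝ))|MeasurableSpace.comap X inferInstance]) ω ∂μ :=
          abadie_pullout hm μ h1sm int1 intI1
      _ = ∫ ω, f (X ω) * (μ[Set.indicator (W ⁻¹' s1) (fun _ => (1 : ℝ))|MeasurableSpace.comap X inferInstance]) ω ∂μ := by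
          refine integral_congr_ae ?_
          filter_upwards [hCI s1 {1} hs1 (measurableSet_singleton 1), hcB1, hqb]
            with ω hci' hb hq'
          rw [hci', hb]
          have hqpos : (0 : ℝ) < q (X ω) := lt_of_lt_of_le hε hq'.1
          field_simp
      _ = ∫ ω, f (X ω) * Set.indicator (W ⁻¹' s1) (fun _ => (1 : ℝ)) ω ∂μ :=
          (abadie_pullout hm μ hfXsm intFA1 intA1).symm
      _ = ∫ ω, f (X ω) * (1 - D1 ω) ∂μ :=
          integral_congr_ae (ae_of_all _ fun ω => by simp only [hind1])
  -- key identity 2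
  have key2 : ∫ ω, (f (X ω) / (1 - q (X ω))) *
      Set.indicator (W ⁻¹' s2 ∩ Z ⁻¹' {0}) (fun _ => (1 : ℝ)) ω ∂μ
      = ∫ ω, f (X ω) * D0 ω ∂μ := by
    calc ∫ ω, (f (X ω) / (1 - q (X ω))) *
          Set.indicator (W ⁻¹' s2 ∩ Z ⁻¹' {0}) (fun _ => (1 : ℝ)) ω ∂μ
        = ∫ ω, (f (X ω) / (1 - q (X ω))) *
            (μ[Set.indicator (W ⁻¹' s2 ∩ Z ⁻¹' {0}) (fun _ => (1 : ℝ))|MeasurableSpace.comap X inferInstance]) ω ∂μ :=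
          abadie_pullout hm μ h2sm int2 intI2
      _ = ∫ ω, f (X ω) * (μ[Set.indicator (W ⁻¹' s2) (fun _ => (1 : ℝ))|MeasurableSpace.comap X inferInstance]) ω ∂μ := by
          refine integral_congr_ae ?_
          filter_upwards [hCI s2 {0} hs2 (measurableSet_singleton 0), hcB0, hqb]
            with ω hci' hb hq'
          rw [hci', hb]
          have hqpos : (0 : ℝ) < 1 - q (X ω) := lt_of_lt_of_le hε (by linarith [hq'.2])
          field_simp
      _ = ∫ ω, f (X ω) * Set.indicator (W ⁻¹' s2) (fun _ => (1 : ℝ)) ω ∂μ :=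
          (abadie_pullout hm μ hfXsm intFA2 intA2).symm
      _ = ∫ ω, f (X ω) * D0 ω ∂μ :=
          integral_congr_ae (ae_of_all _ fun ω => by simp only [hind2])
  -- pointwise decomposition of the integrand
  have hpt : ∀ ω, (1 - (1 - D ω) * Z ω / q (X ω) - D ω * (1 - Z ω) / (1 - q (X ω))) * f (X ω)
      = f (X ω)
        - (f (X ω) / q (X ω)) * Set.indicator (W ⁻¹' s1 ∩ Z ⁻¹' {1}) (fun _ => (1 : ℝ)) ω
        - (f (X ω) / (1 - q (X ω))) *
            Set.indicator (W ⁻¹' s2 ∩ Z ⁻¹' {0}) (fun _ => (1 : ℝ)) ω := by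
    intro ω
    rw [hg1 ω, hg2 ω]
    rcases hZval ω with hz | hz <;> rcases hD0val ω with h0 | h0 <;>
      rcases hD1val ω with h1 | h1 <;>
      (simp only [hD ω, hz, h0, h1]; ring)
  have step : ∫ ω, (1 - (1 - D ω) * Z ω / q (X ω)
        - D ω * (1 - Z ω) / (1 - q (X ω))) * f (X ω) ∂μ
      = ∫ ω, f (X ω) * (D1 ω - D0 ω) ∂μ := by
    have h12 : Integrable (fun ω => f (X ω)
        - (f (X ω) / q (X ω)) * Set.indicator (W ⁻¹' s1 ∩ Z ⁻¹' {1}) (fun _ => (1 : ℝ)) ω) μ :=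
      intF.sub int1
    have h12' : Integrable (fun ω => f (X ω) - f (X ω) * (1 - D1 ω)) μ := intF.sub intB1
    calc ∫ ω, (1 - (1 - D ω) * Z ω / q (X ω) - D ω * (1 - Z ω) / (1 - q (X ω))) * f (X ω) ∂μ
        = ∫ ω, (f (X ω)
            - (f (X ω) / q (X ω)) * Set.indicator (W ⁻¹' s1 ∩ Z ⁻¹' {1}) (fun _ => (1 : ℝ)) ω)
            - (f (X ω) / (1 - q (X ω))) *
                Set.indicator (W ⁻¹' s2 ∩ Z ⁻¹' {0}) (fun _ => (1 : ℝ)) ω ∂μ :=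
          integral_congr_ae (ae_of_all μ hpt)
      _ = (∫ ω, f (X ω)
            - (f (X ω) / q (X ω)) * Set.indicator (W ⁻¹' s1 ∩ Z ⁻¹' {1}) (fun _ => (1 : ℝ)) ω ∂μ)
          - ∫ ω, (f (X ω) / (1 - q (X ω))) *
                Set.indicator (W ⁻¹' s2 ∩ Z ⁻¹' {0}) (fun _ => (1 : ℝ)) ω ∂μ :=
          integral_sub h12 int2
      _ = ((∫ ω, f (X ω) ∂μ)
            - ∫ ω, (f (X ω) / q (X ω)) *
                Set.indicator (W ⁻¹' s1 ∩ Z ⁻¹' {1}) (fun _ => (1 : ℝ)) ω ∂μ)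
          - ∫ ω, (f (X ω) / (1 - q (X ω))) *
                Set.indicator (W ⁻¹' s2 ∩ Z ⁻¹' {0}) (fun _ => (1 : ℝ)) ω ∂μ := by
          rw [integral_sub intF int1]
      _ = ((∫ ω, f (X ω) ∂μ) - ∫ ω, f (X ω) * (1 - D1 ω) ∂μ) - ∫ ω, f (X ω) * D0 ω ∂μ := by
          rw [key1, key2]
      _ = (∫ ω, f (X ω) - f (X ω) * (1 - D1 ω) ∂μ) - ∫ ω, f (X ω) * D0 ω ∂μ := by
          rw [integral_sub intF intB1]
      _ = ∫ ω, (f (X ω) - f (X ω) * (1 - D1 ω)) - f (X ω) * D0 ω ∂μ :=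
          (integral_sub h12' intB2).symm
      _ = ∫ ω, f (X ω) * (D1 ω - D0 ω) ∂μ :=
          integral_congr_ae (ae_of_all μ fun ω => by ring)
  have hCmeas : MeasurableSet {ω | D1 ω = 1 ∧ D0 ω = 0} :=
    (hD1 (measurableSet_singleton 1)).inter (hD0 (measurableSet_singleton 0))
  have hstep2 : ∫ ω, f (X ω) * (D1 ω - D0 ω) ∂μ
      = ∫ ω in {ω | D1 ω = 1 ∧ D0 ω = 0}, f (X ω) ∂μ := by
    rw [← integral_indicator hCmeas]
    refine integral_congr_ae ?_
    filter_upwards [hmono] with ω hmo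
    rcases hD1val ω with h1 | h1
    · rcases hD0val ω with h0 | h0
      · simp [Set.indicator_apply, Set.mem_setOf_eq, h0, h1]
      · exfalso; rw [h0, h1] at hmo; linarith
    · rcases hD0val ω with h0 | h0
      · simp [Set.indicator_apply, Set.mem_setOf_eq, h0, h1]
      · simp [Set.indicator_apply, Set.mem_setOf_eq, h0, h1]
  have hRHS : (μ {ω | D1 ω = 1 ∧ D0 ω = 0}).toReal *
        ∫ ω, f (X ω) ∂(μ[|{ω | D1 ω = 1 ∧ D0 ω = 0}])
      = ∫ ω in {ω | D1 ω = 1 ∧ D0 ω = 0}, f (X ω) ∂μ := by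
    rcases eq_or_ne (μ {ω | D1 ω = 1 ∧ D0 ω = 0}) 0 with hz0 | hz0
    · simp [ProbabilityTheory.cond, hz0, Measure.restrict_eq_zero.mpr hz0]
    · have hfin : μ {ω | D1 ω = 1 ∧ D0 ω = 0} ≠ ⊤ := measure_ne_top μ _
      have htne : (μ {ω | D1 ω = 1 ∧ D0 ω = 0}).toReal ≠ 0 :=
        ENNReal.toReal_ne_zero.mpr ⟨hz0, hfin⟩
      rw [ProbabilityTheory.cond, integral_smul_measure, ENNReal.toReal_inv, smul_eq_mul,
        ← mul_assoc, mul_inv_cancel₀ htne, one_mul]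
  rw [step, hstep2]
  exact hRHS.symm
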